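/- arXiv:1307.3753 — 2 statements merged into one kernel-verified Lean document; each statement's English description precedes it below -/
import Mathlib

section
/- Let X be a finite set with |X| = n, let m ≥ 1 be an integer, let ω = exp(2πi/m), and let B be the set of functions b : X → ZMod m whose support has size at most q. For a family of complex coefficients (β_b)_{b∈B}, define α(f) = Σ_{b∈B} β_b · ω^{Σ_{x∈X} (f(x)·b(x)).val} for each f : X → ZMod m. If there exists a function f : X → ZMod m with α(f) = 1, then Σ_{b∈B} |β_b|² ≥ 1 / (Σ_{i=0}^{q} C(n, i)·(m−1)^i). -/
lemma supp_count (X : Type) [Fintype X] [DecidableEq X] (m : ℕ) [NeZero m] (s : Finset X) :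
    (Finset.univ.filter fun b : X → ZMod m =>
      (Finset.univ.filter fun x => b x ≠ 0) = s).card = (m - 1) ^ s.card := by
  have h1 : (Finset.univ.filter fun b : X → ZMod m =>
      (Finset.univ.filter fun x => b x ≠ 0) = s)
      = Fintype.piFinset (fun x => if x ∈ s then Finset.univ.erase 0 else {0}) := by
    ext b
    simp only [Finset.mem_filter, Finset.mem_univ, true_and, Fintype.mem_piFinset,
      Finset.ext_iff]
    constructor
    · intro h x
      have h2 := (h x).mpr
      have h3 := (h x).mp
      by_cases hx : x ∈ s
      · simpa [hx] using h2 hx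
      · simp only [hx, if_false, Finset.mem_singleton]
        by_contra hb
        exact hx (h3 hb)
    · intro h x
      have := h x
      by_cases hx : x ∈ s <;> simp_all
  rw [h1, Fintype.card_piFinset]
  have h2 : ∀ x : X, (if x ∈ s then (Finset.univ.erase (0 : ZMod m)) else {0}).card
      = if x ∈ s then m - 1 else 1 := by
    intro x
    by_cases hx : x ∈ s <;> simp [hx, Finset.card_erase_of_mem, ZMod.card]
  simp_rw [h2]
  rw [Finset.prod_ite_mem, Finset.univ_inter, Finset.prod_const]

lemma card_B (X : Type) [Fintype X] [DecidableEq X] (m q : ℕ) [NeZero m] :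
    (Finset.univ.filter
      (fun b : X → ZMod m => (Finset.univ.filter fun x => b x ≠ 0).card ≤ q)).card
    = ∑ i ∈ Finset.range (q + 1), (Fintype.card X).choose i * (m - 1) ^ i := by
  rw [Finset.card_eq_sum_card_fiberwise
    (f := fun b : X → ZMod m => (Finset.univ.filter fun x => b x ≠ 0).card)
    (t := Finset.range (q + 1))
    (by intro b hb; simp only [Finset.mem_coe, Finset.mem_filter] at hb; simpa [Finset.mem_range, Nat.lt_succ_iff] using hb.2)]
  refine Finset.sum_congr rfl fun i hi => ?_
  rw [Finset.mem_range, Nat.lt_succ_iff] at hi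
  have heq : ((Finset.univ.filter
      (fun b : X → ZMod m => (Finset.univ.filter fun x => b x ≠ 0).card ≤ q)).filter
      fun b => (Finset.univ.filter fun x => b x ≠ 0).card = i)
      = Finset.univ.filter fun b : X → ZMod m =>
          (Finset.univ.filter fun x => b x ≠ 0).card = i := by
    ext b
    simp only [Finset.mem_filter, Finset.mem_univ, true_and]
    constructor
    · exact fun h => h.2
    · exact fun h => ⟨h ▸ hi, h⟩
  rw [heq]
  rw [Finset.card_eq_sum_card_fiberwise
    (f := fun b : X → ZMod m => Finset.univ.filter fun x => b x ≠ 0)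
    (t := Finset.powersetCard i Finset.univ)
    (by intro b hb; simp only [Finset.mem_coe, Finset.mem_filter, Finset.mem_univ, true_and] at hb
        simp [Finset.mem_coe, Finset.mem_powersetCard, hb])]
  have : ∀ s ∈ Finset.powersetCard i (Finset.univ : Finset X),
      ((Finset.univ.filter fun b : X → ZMod m =>
        (Finset.univ.filter fun x => b x ≠ 0).card = i).filter
        fun b => (Finset.univ.filter fun x => b x ≠ 0) = s).card = (m - 1) ^ i := by
    intro s hs
    rw [Finset.mem_powersetCard] at hs
    have heq2 : ((Finset.univ.filter fun b : X → ZMod m =>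
        (Finset.univ.filter fun x => b x ≠ 0).card = i).filter
        fun b => (Finset.univ.filter fun x => b x ≠ 0) = s)
        = Finset.univ.filter fun b : X → ZMod m =>
            (Finset.univ.filter fun x => b x ≠ 0) = s := by
      ext b
      simp only [Finset.mem_filter, Finset.mem_univ, true_and]
      exact ⟨fun h => h.2, fun h => ⟨by rw [h, hs.2], h⟩⟩
    rw [heq2, supp_count, hs.2]
  rw [Finset.sum_congr rfl this, Finset.sum_const, Finset.card_powersetCard,
    Finset.card_univ, smul_eq_mul]

theorem stmt_4 (X : Type) [Fintype X] [DecidableEq X] (n m q : ℕ) [NeZero m]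
    (hn : Fintype.card X = n)
    (ω : ℂ) (hω : ω = Complex.exp (2 * Real.pi * Complex.I / m))
    (B : Finset (X → ZMod m))
    (hB : B = Finset.univ.filter
      (fun b : X → ZMod m => (Finset.univ.filter fun x => b x ≠ 0).card ≤ q))
    (β : (X → ZMod m) → ℂ) (α : (X → ZMod m) → ℂ)
    (hα : ∀ f, α f = ∑ b ∈ B, β b * ω ^ (∑ x, (f x * b x).val))
    (hf : ∃ f : X → ZMod m, α f = 1) :
    ∑ b ∈ B, ‖β b‖ ^ 2
      ≥ 1 / ∑ i ∈ Finset.range (q + 1), ((n.choose i * (m - 1) ^ i : ℕ) : ℝ) := by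
  have hωabs : ‖ω‖ = 1 := by
    rw [hω, Complex.norm_exp]
    have hre : (2 * Real.pi * Complex.I / m).re = 0 := by
      rw [Complex.div_re]
      simp [Complex.mul_re, Complex.mul_im]
    rw [hre, Real.exp_zero]
  -- S as natural number
  have hcard : B.card = ∑ i ∈ Finset.range (q + 1), n.choose i * (m - 1) ^ i := by
    rw [hB, card_B, hn]
  have hSpos : 0 < ∑ i ∈ Finset.range (q + 1), n.choose i * (m - 1) ^ i := by
    rw [← hcard, Finset.card_pos, hB]
    exact ⟨0, by simp⟩
  -- 1 ≤ ∑ |β b|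
  obtain ⟨f, hf1⟩ := hf
  have h1 : (1 : ℝ) ≤ ∑ b ∈ B, ‖β b‖ := by
    calc (1 : ℝ) = ‖α f‖ := by rw [hf1]; simp
    _ ≤ ∑ b ∈ B, ‖β b * ω ^ (∑ x, (f x * b x).val)‖ := by
        rw [hα]; exact norm_sum_le _ _
    _ = ∑ b ∈ B, ‖β b‖ := by
        refine Finset.sum_congr rfl fun b _ => ?_
        rw [norm_mul, norm_pow, hωabs, one_pow, mul_one]
  -- Cauchy-Schwarz
  have hcs : (∑ b ∈ B, ‖β b‖) ^ 2
      ≤ (B.card : ℝ) * ∑ b ∈ B, ‖β b‖ ^ 2 := by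
    have := Finset.sum_mul_sq_le_sq_mul_sq B (fun _ => (1:ℝ)) (fun b => ‖β b‖)
    simpa using this
  have hkey : (1 : ℝ) ≤ (B.card : ℝ) * ∑ b ∈ B, ‖β b‖ ^ 2 :=
    le_trans (by nlinarith) hcs
  have hS : ((∑ i ∈ Finset.range (q + 1), n.choose i * (m - 1) ^ i : ℕ) : ℝ)
      = (B.card : ℝ) := by rw [hcard]
  have hSpos' : (0:ℝ) < (B.card : ℝ) := by
    rw [← hS]; exact_mod_cast hSpos
  rw [ge_iff_le, div_le_iff₀ (by rw [← Nat.cast_sum] at *; rw [hS]; exact hSpos')]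
  calc (1:ℝ) ≤ (B.card : ℝ) * ∑ b ∈ B, ‖β b‖ ^ 2 := hkey
  _ = (∑ b ∈ B, ‖β b‖ ^ 2) * ∑ i ∈ Finset.range (q + 1), ((n.choose i * (m - 1) ^ i : ℕ) : ℝ) := by
      rw [mul_comm, ← Nat.cast_sum, hS]
end

section
/- Let X be a finite set with |X| = n, let m ≥ 1 be an integer, let ω = exp(2πi/m), and let B be the set of functions b : X → ZMod m whose support has size at most q. For a family of complex coefficients (β_b)_{b∈B}, define α(f) = Σ_{b∈B} β_b · ω^{Σ_{x∈X} (f(x)·b(x)).val} for each f : X → ZMod m. If there exists a function f̂ : X → ZMod m with α(f̂) = 1, then the average (1/m^n)·Σ_{g : X → ZMod m} |α(g)|² is at least 1 / (Σ_{i=0}^{q} C(n, i)·(m−1)^i). -/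
open Finset

theorem aux_charsum (m : ℕ) [NeZero m] (ω : ℂ) (hω1 : ω ^ m = 1)
    (hprim : IsPrimitiveRoot ω m) (c : ZMod m) :
    ∑ a : ZMod m, ω ^ (a * c).val = if c = 0 then (m : ℂ) else 0 := by
  have hmod : ∀ j : ℕ, ω ^ (j % m) = ω ^ j := by
    intro j
    conv_rhs => rw [← Nat.mod_add_div j m]
    rw [pow_add, pow_mul, hω1, one_pow, mul_one]
  by_cases hc : c = 0
  · simp [hc, ZMod.val_zero, Finset.card_univ, ZMod.card]
  · rw [if_neg hc]
    have hterm : ∀ a : ZMod m, ω ^ (a * c).val = (ω ^ c.val) ^ a.val := by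
      intro a
      rw [ZMod.val_mul, hmod, ← pow_mul, mul_comm]
    simp only [hterm]
    have : ∑ a : ZMod m, (ω ^ c.val) ^ a.val = ∑ j ∈ Finset.range m, (ω ^ c.val) ^ j := by
      refine Finset.sum_nbij' (fun a => a.val) (fun j => (j : ZMod m))
        (fun a _ => Finset.mem_range.2 (ZMod.val_lt a)) (fun j _ => Finset.mem_univ _)
        (fun a _ => ZMod.natCast_rightInverse a)
        (fun j hj => ZMod.val_cast_of_lt (Finset.mem_range.1 hj)) (fun a _ => rfl)
    rw [this, geom_sum_eq, ← pow_mul, mul_comm, pow_mul, hω1, one_pow, sub_self, zero_div]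
    exact hprim.pow_ne_one_of_pos_of_lt (ZMod.val_pos.2 hc).ne' (ZMod.val_lt c)

theorem aux_orth (X : Type) [Fintype X] [DecidableEq X] (n m : ℕ) [NeZero m]
    (hn : Fintype.card X = n)
    (ω : ℂ) (hω1 : ω ^ m = 1) (hprim : IsPrimitiveRoot ω m)
    (b b' : X → ZMod m) :
    ∑ g : X → ZMod m, (∏ x, ω ^ (g x * b x).val) *
      star (∏ x, ω ^ (g x * b' x).val)
      = if b = b' then (m : ℂ) ^ n else 0 := by
  classical
  have hmod : ∀ j : ℕ, ω ^ (j % m) = ω ^ j := by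
    intro j
    conv_rhs => rw [← Nat.mod_add_div j m]
    rw [pow_add, pow_mul, hω1, one_pow, mul_one]
  set χ : ZMod m → ℂ := fun a => ω ^ a.val with hχ
  have hχ0 : χ 0 = 1 := by simp [hχ]
  have hχadd : ∀ a c : ZMod m, χ (a + c) = χ a * χ c := by
    intro a c
    show ω ^ (a+c).val = ω ^ a.val * ω ^ c.val
    rw [ZMod.val_add, hmod, pow_add]
  have hstar : ∀ a : ZMod m, star (χ a) = χ (-a) := by
    intro a
    have h1 : χ a * χ (-a) = 1 := by rw [← hχadd, add_neg_cancel, hχ0]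
    have habs : ‖χ a‖ = 1 := by
      show ‖ω ^ a.val‖ = 1
      rw [norm_pow, Complex.norm_eq_one_of_pow_eq_one hω1 (NeZero.ne m), one_pow]
    have hinv : (χ a)⁻¹ = star (χ a) := Complex.inv_eq_conj habs
    rw [← hinv]
    exact inv_eq_of_mul_eq_one_right h1
  have hstep : ∀ g : X → ZMod m,
      (∏ x, χ (g x * b x)) * star (∏ x, χ (g x * b' x))
        = ∏ x, χ (g x * (b x - b' x)) := by
    intro g
    rw [star_prod, ← Finset.prod_mul_distrib]
    refine Finset.prod_congr rfl fun x _ => ?_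
    rw [hstar, ← hχadd]
    congr 1
    ring
  calc ∑ g : X → ZMod m, (∏ x, χ (g x * b x)) * star (∏ x, χ (g x * b' x))
      = ∑ g : X → ZMod m, ∏ x, χ (g x * (b x - b' x)) :=
        Finset.sum_congr rfl fun g _ => hstep g
    _ = ∏ x, ∑ a : ZMod m, χ (a * (b x - b' x)) := by
        rw [Fintype.prod_sum]
    _ = ∏ x, if b x - b' x = 0 then (m : ℂ) else 0 :=
        Finset.prod_congr rfl fun x _ => aux_charsum m ω hω1 hprim _
    _ = if b = b' then (m : ℂ) ^ n else 0 := by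
        by_cases hbb : b = b'
        · rw [if_pos hbb]
          subst hbb
          simp [hn]
        · rw [if_neg hbb]
          obtain ⟨x, hx⟩ : ∃ x, b x ≠ b' x := Function.ne_iff.1 hbb
          exact Finset.prod_eq_zero (Finset.mem_univ x) (by rw [if_neg (sub_ne_zero.2 hx)])

theorem aux_countB (X : Type) [Fintype X] [DecidableEq X] (n m q : ℕ) [NeZero m]
    (hn : Fintype.card X = n)
    (B : Finset (X → ZMod m))
    (hB : B = Finset.univ.filter
      (fun b : X → ZMod m => (Finset.univ.filter fun x => b x ≠ 0).card ≤ q)) :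
    B.card ≤ ∑ i ∈ Finset.range (q + 1), n.choose i * (m - 1) ^ i := by
  classical
  have hpart : B.card = ∑ i ∈ Finset.range (q + 1),
      (B.filter fun b => (Finset.univ.filter fun x => b x ≠ 0).card = i).card := by
    apply Finset.card_eq_sum_card_fiberwise
    intro b hb
    rw [hB, Finset.mem_coe, Finset.mem_filter] at hb
    exact Finset.mem_range.2 (Nat.lt_succ_of_le hb.2)
  rw [hpart]
  apply Finset.sum_le_sum
  intro i _
  set F := B.filter fun b => (Finset.univ.filter fun x => b x ≠ 0).card = i with hF
  have hpart2 : F.card = ∑ S ∈ Finset.powersetCard i (Finset.univ : Finset X),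
      (F.filter fun b => (Finset.univ.filter fun x => b x ≠ 0) = S).card := by
    apply Finset.card_eq_sum_card_fiberwise
    intro b hb
    rw [hF, Finset.mem_coe, Finset.mem_filter] at hb
    exact Finset.mem_powersetCard.2 ⟨Finset.subset_univ _, hb.2⟩
  rw [hpart2]
  have hSbound : ∀ S ∈ Finset.powersetCard i (Finset.univ : Finset X),
      (F.filter fun b => (Finset.univ.filter fun x => b x ≠ 0) = S).card ≤ (m - 1) ^ i := by
    intro S hS
    have hScard : S.card = i := (Finset.mem_powersetCard.1 hS).2
    set T := F.filter fun b => (Finset.univ.filter fun x => b x ≠ 0) = S with hT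
    have hmem : ∀ b ∈ T, ∀ x : X, x ∈ S ↔ b x ≠ 0 := by
      intro b hb x
      have h2 := (Finset.mem_filter.1 hb).2
      constructor
      · intro hx
        have : x ∈ Finset.univ.filter fun x => b x ≠ 0 := h2 ▸ hx
        exact (Finset.mem_filter.1 this).2
      · intro hx
        rw [← h2]
        exact Finset.mem_filter.2 ⟨Finset.mem_univ _, hx⟩
    have hcard : Fintype.card (∀ _ : {x // x ∈ S}, {a : ZMod m // a ≠ 0}) = (m-1)^i := by
      have h1 : Fintype.card {a : ZMod m // a ≠ 0} = m - 1 := by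
        simp [Fintype.card_subtype_compl, ZMod.card]
      simp [Fintype.card_pi, h1, Finset.prod_const, hScard]
    have : T.card = Fintype.card {b // b ∈ T} := (Fintype.card_coe T).symm
    rw [this, ← hcard]
    apply Fintype.card_le_of_injective
      (fun b => fun x : {x // x ∈ S} =>
        (⟨b.1 x.1, (hmem b.1 b.2 x.1).1 x.2⟩ : {a : ZMod m // a ≠ 0}))
    intro b b' heq
    ext x
    by_cases hx : x ∈ S
    · have := congrFun heq ⟨x, hx⟩
      exact congrArg Subtype.val this
    · have h1 : b.1 x = 0 := by
        by_contra h; exact hx ((hmem b.1 b.2 x).2 h)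
      have h2 : b'.1 x = 0 := by
        by_contra h; exact hx ((hmem b'.1 b'.2 x).2 h)
      rw [h1, h2]
  calc ∑ S ∈ Finset.powersetCard i (Finset.univ : Finset X),
      (F.filter fun b => (Finset.univ.filter fun x => b x ≠ 0) = S).card
      ≤ ∑ _S ∈ Finset.powersetCard i (Finset.univ : Finset X), (m-1)^i :=
        Finset.sum_le_sum hSbound
    _ = n.choose i * (m-1)^i := by
        rw [Finset.sum_const, Finset.card_powersetCard, Finset.card_univ, hn, smul_eq_mul]

theorem stmt_5 (X : Type) [Fintype X] [DecidableEq X] (n m q : ℕ) [NeZero m]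
    (hn : Fintype.card X = n)
    (ω : ℂ) (hω : ω = Complex.exp (2 * Real.pi * Complex.I / m))
    (B : Finset (X → ZMod m))
    (hB : B = Finset.univ.filter
      (fun b : X → ZMod m => (Finset.univ.filter fun x => b x ≠ 0).card ≤ q))
    (β : (X → ZMod m) → ℂ) (α : (X → ZMod m) → ℂ)
    (hα : ∀ f, α f = ∑ b ∈ B, β b * ω ^ (∑ x, (f x * b x).val))
    (hf : ∃ f : X → ZMod m, α f = 1) :
    (1 / (m : ℝ) ^ n) * ∑ g : X → ZMod m, ‖α g‖ ^ 2
      ≥ 1 / ∑ i ∈ Finset.range (q + 1), ((n.choose i * (m - 1) ^ i : ℕ) : ℝ) := by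
  classical
  obtain ⟨f₀, hf₀⟩ := hf
  have hm : m ≠ 0 := NeZero.ne m
  have hprim : IsPrimitiveRoot ω m := hω ▸ Complex.isPrimitiveRoot_exp m hm
  have hω1 : ω ^ m = 1 := hprim.pow_eq_one
  have habsω : ‖ω‖ = 1 := Complex.norm_eq_one_of_pow_eq_one hω1 hm
  have hαg : ∀ g, α g = ∑ b ∈ B, β b * ∏ x, ω ^ (g x * b x).val := by
    intro g
    rw [hα]
    refine Finset.sum_congr rfl fun b _ => ?_
    rw [Finset.prod_pow_eq_pow_sum]
  have h1 : ∀ z : ℂ, z * star z = ((‖z‖ : ℝ) : ℂ) ^ 2 := by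
    intro z
    rw [Complex.star_def, Complex.mul_conj, ← Complex.sq_norm, Complex.ofReal_pow]
  have hkey : ∑ g : X → ZMod m, α g * star (α g)
      = (m : ℂ) ^ n * ∑ b ∈ B, β b * star (β b) := by
    calc ∑ g : X → ZMod m, α g * star (α g)
        = ∑ g : X → ZMod m, ∑ b ∈ B, ∑ b' ∈ B, (β b * star (β b')) *
            ((∏ x, ω ^ (g x * b x).val) * star (∏ x, ω ^ (g x * b' x).val)) := by
          refine Finset.sum_congr rfl fun g _ => ?_
          rw [hαg, star_sum, Finset.sum_mul_sum]
          refine Finset.sum_congr rfl fun b _ => Finset.sum_congr rfl fun b' _ => ?_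
          rw [star_mul']
          ring
      _ = ∑ b ∈ B, ∑ b' ∈ B, (β b * star (β b')) *
            ∑ g : X → ZMod m, (∏ x, ω ^ (g x * b x).val) *
              star (∏ x, ω ^ (g x * b' x).val) := by
          rw [Finset.sum_comm]
          refine Finset.sum_congr rfl fun b _ => ?_
          rw [Finset.sum_comm]
          refine Finset.sum_congr rfl fun b' _ => ?_
          rw [Finset.mul_sum]
      _ = ∑ b ∈ B, ∑ b' ∈ B, (β b * star (β b')) *
            (if b = b' then (m : ℂ) ^ n else 0) := by
          refine Finset.sum_congr rfl fun b _ => Finset.sum_congr rfl fun b' _ => ?_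
          rw [aux_orth X n m hn ω hω1 hprim b b']
      _ = ∑ b ∈ B, (β b * star (β b)) * (m : ℂ) ^ n := by
          refine Finset.sum_congr rfl fun b hb => ?_
          rw [Finset.sum_eq_single b]
          · rw [if_pos rfl]
          · intro b' _ hne
            rw [if_neg (fun h => hne h.symm), mul_zero]
          · intro h; exact absurd hb h
      _ = (m : ℂ) ^ n * ∑ b ∈ B, β b * star (β b) := by
          rw [← Finset.sum_mul]; ring
  set S : ℝ := ∑ b ∈ B, ‖β b‖ ^ 2 with hS
  have hSnonneg : 0 ≤ S :=
    Finset.sum_nonneg fun b _ => sq_nonneg _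
  have hreal : ∑ g : X → ZMod m, ‖α g‖ ^ 2 = (m : ℝ) ^ n * S := by
    apply Complex.ofReal_injective
    rw [hS]
    push_cast
    calc (∑ g : X → ZMod m, ((‖α g‖ : ℝ) : ℂ) ^ 2)
        = ∑ g : X → ZMod m, α g * star (α g) :=
          Finset.sum_congr rfl fun g _ => (h1 (α g)).symm
      _ = (m : ℂ) ^ n * ∑ b ∈ B, β b * star (β b) := hkey
      _ = (m : ℂ) ^ n * ∑ b ∈ B, ((‖β b‖ : ℝ) : ℂ) ^ 2 := by
          congr 1
          exact Finset.sum_congr rfl fun b _ => h1 (β b)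
  have h1le : (1 : ℝ) ≤ ∑ b ∈ B, ‖β b‖ := by
    have heq : (1 : ℝ) = ‖α f₀‖ := by rw [hf₀, norm_one]
    rw [heq, hαg]
    refine le_trans (norm_sum_le _ _) (le_of_eq ?_)
    refine Finset.sum_congr rfl fun b _ => ?_
    rw [norm_mul]
    have : ‖∏ x, ω ^ (f₀ x * b x).val‖ = 1 := by
      rw [norm_prod]
      simp [map_pow, habsω]
    rw [this, mul_one]
  have hcs : (∑ b ∈ B, ‖β b‖) ^ 2 ≤ B.card * S :=
    sq_sum_le_card_mul_sum_sq
  set K : ℝ := ∑ i ∈ Finset.range (q + 1), ((n.choose i * (m - 1) ^ i : ℕ) : ℝ) with hK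
  have hKnat : B.card ≤ ∑ i ∈ Finset.range (q + 1), n.choose i * (m - 1) ^ i :=
    aux_countB X n m q hn B hB
  have hBK : (B.card : ℝ) ≤ K := by
    rw [hK]
    push_cast
    exact_mod_cast hKnat
  have hK1 : (1 : ℝ) ≤ K := by
    rw [hK]
    have h0 : ((n.choose 0 * (m - 1) ^ 0 : ℕ) : ℝ) = 1 := by norm_num
    calc (1 : ℝ) = ((n.choose 0 * (m - 1) ^ 0 : ℕ) : ℝ) := h0.symm
      _ ≤ _ := Finset.single_le_sum
          (f := fun i => ((n.choose i * (m - 1) ^ i : ℕ) : ℝ))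
          (fun i _ => by positivity) (Finset.mem_range.2 (Nat.succ_pos q))
  have hKpos : (0 : ℝ) < K := lt_of_lt_of_le one_pos hK1
  have hone_le : (1 : ℝ) ≤ K * S := by
    have h2 : (1 : ℝ) ≤ (B.card : ℝ) * S := by nlinarith
    calc (1 : ℝ) ≤ (B.card : ℝ) * S := h2
      _ ≤ K * S := mul_le_mul_of_nonneg_right hBK hSnonneg
  have hmpos : (0 : ℝ) < (m : ℝ) ^ n := by positivity
  have hsimp : (1 / (m : ℝ) ^ n) * ((m : ℝ) ^ n * S) = S := by
    field_simp
  rw [ge_iff_le, hreal, hsimp, div_le_iff₀ hKpos]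
  linarith [hone_le, mul_comm K S]
end
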